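/- arXiv:2106.06249 — 3 statements merged into one kernel-verified Lean document; each statement's English description precedes it below -/
import Mathlib

section
/- Let α = v0 x v1 x v2 ... x v_{m_x} be a unary pattern with single variable x and let w be a word with |w| = m' + m_x·ℓ for some ℓ ≥ 0. Then d_H(α, w) = C + min over words u of length ℓ of Σ_{i=1}^{m_x} d_H(u, w_i), where C and the factors w_i are as determined by the alignment, and the minimum is achieved by the positionwise-majority (median) string of w_1, ..., w_{m_x}. -/
/-- Hamming distance between equal-length words, as lists. -/
def hdist {σ : Type*} [DecidableEq σ] (u v : List σ) : ℕ :=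
  ((List.zip u v).filter fun p => p.1 ≠ p.2).length

/-- The image of the unary pattern v₀ x v₁ x ⋯ x v_{mx} under the substitution x ↦ u. -/
def build {σ : Type*} (mx : ℕ) (v : ℕ → List σ) (u : List σ) : List σ :=
  (List.range mx).flatMap (fun i => v i ++ u) ++ v mx

/-- The factor of w of length ℓ aligned with the i-th occurrence of x. -/
def wfac {σ : Type*} (v : ℕ → List σ) (ℓ : ℕ) (w : List σ) (i : ℕ) : List σ :=
  (w.drop ((∑ j ∈ Finset.range (i + 1), (v j).length) + i * ℓ)).take ℓ

section Aux

variable {σ : Type*} [DecidableEq σ]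

lemma hdist_append (a b c d : List σ) (h : a.length = c.length) :
    hdist (a ++ b) (c ++ d) = hdist a c + hdist b d := by
  unfold hdist
  rw [List.zip_append h, List.filter_append, List.length_append]

lemma build_zero (v : ℕ → List σ) (u : List σ) : build 0 v u = v 0 := by
  simp [build]

lemma build_succ (mx : ℕ) (v : ℕ → List σ) (u : List σ) :
    build (mx + 1) v u = (v 0 ++ u) ++ build mx (fun i => v (i + 1)) u := by
  simp only [build, List.range_succ_eq_map, List.flatMap_cons, List.flatMap_map,
    List.append_assoc]

lemma build_length (mx : ℕ) (v : ℕ → List σ) (u : List σ) :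
    (build mx v u).length = (∑ j ∈ Finset.range (mx + 1), (v j).length) + mx * u.length := by
  induction mx generalizing v with
  | zero => simp [build]
  | succ n ih =>
    rw [build_succ, List.length_append, List.length_append, ih,
      Finset.sum_range_succ' (fun j => (v j).length) (n + 1)]
    ring

lemma wfac_zero (v : ℕ → List σ) (ℓ : ℕ) (w : List σ) :
    wfac v ℓ w 0 = (w.drop (v 0).length).take ℓ := by
  simp [wfac]

lemma wfac_succ (v : ℕ → List σ) (ℓ : ℕ) (w : List σ) (i : ℕ) :
    wfac v ℓ w (i + 1) = wfac (fun j => v (j + 1)) ℓ (w.drop ((v 0).length + ℓ)) i := by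
  unfold wfac
  rw [List.drop_drop]
  have h : (∑ j ∈ Finset.range (i + 1 + 1), (v j).length) + (i + 1) * ℓ
      = ((v 0).length + ℓ) + ((∑ j ∈ Finset.range (i + 1), (v (j + 1)).length) + i * ℓ) := by
    rw [Finset.sum_range_succ' (fun j => (v j).length) (i + 1)]
    ring
  rw [h]

/-- The constant `C`: the mismatch count of the fixed (terminal) parts. -/
def Cfun : ℕ → (ℕ → List σ) → ℕ → List σ → ℕ
  | 0, v, _, w => hdist (v 0) w
  | (mx + 1), v, ℓ, w =>
      hdist (v 0) (w.take (v 0).length) +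
        Cfun mx (fun i => v (i + 1)) ℓ (w.drop ((v 0).length + ℓ))

lemma hdist_decomp (ℓ : ℕ) :
    ∀ (mx : ℕ) (v : ℕ → List σ) (w u : List σ), u.length = ℓ →
    w.length = (∑ j ∈ Finset.range (mx + 1), (v j).length) + mx * ℓ →
    hdist (build mx v u) w =
      Cfun mx v ℓ w + ∑ i ∈ Finset.range mx, hdist u (wfac v ℓ w i) := by
  intro mx
  induction mx with
  | zero => intro v w u hu hw; simp [build_zero, Cfun]
  | succ n ih =>
    intro v w u hu hw
    have hv0 : (v 0).length + ℓ ≤ w.length := by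
      rw [hw]
      have h1 : (v 0).length ≤ ∑ j ∈ Finset.range (n + 1 + 1), (v j).length :=
        Finset.single_le_sum (f := fun j => (v j).length) (by intro i _; exact Nat.zero_le _)
          (Finset.mem_range.2 (by omega))
      have h2 : ℓ ≤ (n + 1) * ℓ := Nat.le_mul_of_pos_left ℓ (by omega)
      omega
    have htk : ((v 0 ++ u).length = (w.take ((v 0).length + ℓ)).length) := by
      simp [List.length_take, hu]
      omega
    have hsplit : w = w.take ((v 0).length + ℓ) ++ w.drop ((v 0).length + ℓ) :=
      (List.take_append_drop _ _).symm
    rw [build_succ]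
    conv_lhs => rw [hsplit]
    rw [hdist_append _ _ _ _ htk]
    have htk2 : w.take ((v 0).length + ℓ)
        = w.take (v 0).length ++ (w.drop (v 0).length).take ℓ := List.take_add
    rw [htk2, hdist_append _ _ _ _ (by simp [List.length_take]; omega)]
    have hw' : (w.drop ((v 0).length + ℓ)).length =
        (∑ j ∈ Finset.range (n + 1), ((fun i => v (i + 1)) j).length) + n * ℓ := by
      rw [List.length_drop, hw, Finset.sum_range_succ' (fun j => (v j).length) (n + 1),
        Nat.succ_mul]
      simp only []
      omega
    rw [ih (fun i => v (i + 1)) _ u hu hw']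
    rw [Finset.sum_range_succ' (fun i => hdist u (wfac v ℓ w i)) n]
    have : ∀ i, wfac v ℓ w (i + 1) = wfac (fun j => v (j + 1)) ℓ (w.drop ((v 0).length + ℓ)) i :=
      wfac_succ v ℓ w
    simp only [this, wfac_zero, Cfun]
    ring

lemma wfac_length {mx ℓ : ℕ} {v : ℕ → List σ} {w : List σ}
    (hw : w.length = (∑ j ∈ Finset.range (mx + 1), (v j).length) + mx * ℓ)
    {i : ℕ} (hi : i < mx) : (wfac v ℓ w i).length = ℓ := by
  unfold wfac
  rw [List.length_take, List.length_drop]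
  have h1 : (∑ j ∈ Finset.range (i + 1), (v j).length)
      ≤ ∑ j ∈ Finset.range (mx + 1), (v j).length :=
    Finset.sum_le_sum_of_subset (Finset.range_subset_range.2 (by omega))
  have h2 : i * ℓ + ℓ ≤ mx * ℓ := by
    have h := Nat.mul_le_mul_right ℓ (show i + 1 ≤ mx by omega)
    rwa [Nat.succ_mul] at h
  omega

lemma hdist_eq_sum [Inhabited σ] :
    ∀ (n : ℕ) (u v : List σ), u.length = n → v.length = n →
      hdist u v = ∑ j ∈ Finset.range n,
        (if u.getD j default ≠ v.getD j default then 1 else 0) := by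
  intro n
  induction n with
  | zero =>
    intro u v hu hv
    rw [List.length_eq_zero_iff] at hu hv
    subst hu; subst hv; simp [hdist]
  | succ n ih =>
    intro u v hu hv
    match u, v with
    | a :: u, b :: v =>
      simp only [List.length_cons, Nat.succ.injEq] at hu hv
      have hc : hdist (a :: u) (b :: v) = (if a ≠ b then 1 else 0) + hdist u v := by
        unfold hdist
        simp only [List.zip_cons_cons, List.filter_cons]
        by_cases h : a = b <;> simp [h, Nat.add_comm]
      rw [hc, ih u v hu hv, Finset.sum_range_succ'
        (fun j => if (a :: u).getD j default ≠ (b :: v).getD j default then 1 else 0) n]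
      simp [List.getD_cons_succ, List.getD_cons_zero, add_comm]

end Aux

/-- For a unary pattern v₀ x v₁ x ⋯ x v_{mx} (mx ≥ 1) and a word w of matching length,
d_H(α, w) = C + min over |u| = ℓ of Σᵢ d_H(u, wᵢ), the minimum being achieved by any
positionwise-majority (median) string of the aligned factors w₁, …, w_{mx}. -/
theorem stmt8 {σ : Type*} [DecidableEq σ] [Fintype σ] [Inhabited σ]
    (mx ℓ : ℕ) (hmx : 1 ≤ mx) (v : ℕ → List σ) (w : List σ)
    (m' : ℕ) (hm' : m' = ∑ j ∈ Finset.range (mx + 1), (v j).length)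
    (hw : w.length = m' + mx * ℓ) :
    ∃ C : ℕ,
      (∀ u : List σ, u.length = ℓ →
        hdist (build mx v u) w = C + ∑ i ∈ Finset.range mx, hdist u (wfac v ℓ w i)) ∧
      (∀ med : List σ, med.length = ℓ →
        (∀ j < ℓ, ∀ a : σ,
          ((Finset.range mx).filter fun i => (wfac v ℓ w i).getD j default = a).card ≤
            ((Finset.range mx).filter
              fun i => (wfac v ℓ w i).getD j default = med.getD j default).card) →
        (∀ u : List σ, u.length = ℓ →
          ∑ i ∈ Finset.range mx, hdist med (wfac v ℓ w i) ≤
            ∑ i ∈ Finset.range mx, hdist u (wfac v ℓ w i)) ∧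
        sInf {d : ℕ | ∃ u : List σ,
            (build mx v u).length = w.length ∧ d = hdist (build mx v u) w} =
          C + ∑ i ∈ Finset.range mx, hdist med (wfac v ℓ w i)) := by
  subst hm'
  refine ⟨Cfun mx v ℓ w, fun u hu => hdist_decomp ℓ mx v w u hu hw, ?_⟩
  intro med hmed hmaj
  -- median minimality
  have key : ∀ u : List σ, u.length = ℓ →
      ∑ i ∈ Finset.range mx, hdist med (wfac v ℓ w i) ≤
        ∑ i ∈ Finset.range mx, hdist u (wfac v ℓ w i) := by
    intro u hu
    have hrw : ∀ (z : List σ), z.length = ℓ →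
        ∑ i ∈ Finset.range mx, hdist z (wfac v ℓ w i) =
          ∑ j ∈ Finset.range ℓ, ∑ i ∈ Finset.range mx,
            (if z.getD j default ≠ (wfac v ℓ w i).getD j default then 1 else 0) := by
      intro z hz
      rw [Finset.sum_comm]
      exact Finset.sum_congr rfl fun i hi =>
        hdist_eq_sum ℓ z _ hz (wfac_length hw (Finset.mem_range.1 hi))
    rw [hrw med hmed, hrw u hu]
    refine Finset.sum_le_sum fun j hj => ?_
    have hcnt : ∀ c : σ,
        ∑ i ∈ Finset.range mx,
            (if c ≠ (wfac v ℓ w i).getD j default then 1 else 0) =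
          mx - ((Finset.range mx).filter
            fun i => (wfac v ℓ w i).getD j default = c).card := by
      intro c
      have h1 : ∑ i ∈ Finset.range mx,
          (if c ≠ (wfac v ℓ w i).getD j default then 1 else 0) =
          ((Finset.range mx).filter
            fun i => ¬ ((wfac v ℓ w i).getD j default = c)).card := by
        rw [Finset.card_filter]
        exact Finset.sum_congr rfl fun i _ => by
          by_cases h : (wfac v ℓ w i).getD j default = c <;> simp [h, Ne, eq_comm]
      have h2 := Finset.card_filter_add_card_filter_not
        (s := Finset.range mx) (fun i => (wfac v ℓ w i).getD j default = c)
      rw [h1]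
      simp only [Finset.card_range] at h2 ⊢
      omega
    rw [hcnt (med.getD j default), hcnt (u.getD j default)]
    have hle := hmaj j (Finset.mem_range.1 hj) (u.getD j default)
    have hb : ((Finset.range mx).filter
        fun i => (wfac v ℓ w i).getD j default = med.getD j default).card ≤ mx := by
      simpa using Finset.card_filter_le (Finset.range mx) _
    omega
  refine ⟨key, ?_⟩
  -- the sInf part
  have hmem : Cfun mx v ℓ w + ∑ i ∈ Finset.range mx, hdist med (wfac v ℓ w i) ∈
      {d : ℕ | ∃ u : List σ,
        (build mx v u).length = w.length ∧ d = hdist (build mx v u) w} := by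
    refine ⟨med, ?_, (hdist_decomp ℓ mx v w med hmed hw).symm⟩
    rw [build_length, hw, hmed]
  refine le_antisymm (Nat.sInf_le hmem) (le_csInf ⟨_, hmem⟩ ?_)
  rintro d ⟨u, hlen, rfl⟩
  have hul : u.length = ℓ := by
    rw [build_length, hw] at hlen
    have := Nat.eq_of_mul_eq_mul_left (show 0 < mx by omega)
      (show mx * u.length = mx * ℓ by omega)
    exact this
  rw [hdist_decomp ℓ mx v w u hul hw]
  exact Nat.add_le_add_left (key u hul) _
end

section
/- Two binary vectors u, v ∈ {0,1}^d are orthogonal (i.e., u[k]·v[k] = 0 for all k) if and only if, for each coordinate k, the pair of 3-letter code words (A'(u[k]), B'(v[k])) has Hamming distance exactly 1, where A'(0) = 001, A'(1) = 100, B'(0) = 000, B'(1) = 011; and if u, v are not orthogonal then for some k the pair has Hamming distance 3. Consequently, d_H(A'(u[1])#A'(u[2])#...#A'(u[d]), B'(v[1])#B'(v[2])#...#B'(v[d])) = d if u and v are orthogonal, and ≥ d + 2 otherwise, where # is a fixed separator string on which the two encodings agree. -/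
/-- The coordinate gadget for vectors in U: A'(0) = 001, A'(1) = 100. -/
def Agad : Bool → List Bool
  | false => [false, false, true]
  | true => [true, false, false]

/-- The coordinate gadget for vectors in V: B'(0) = 000, B'(1) = 011. -/
def Bgad : Bool → List Bool
  | false => [false, false, false]
  | true => [false, true, true]

lemma hdist_append_s12 {σ : Type*} [DecidableEq σ] (u1 v1 u2 v2 : List σ)
    (h : u1.length = v1.length) :
    hdist (u1 ++ u2) (v1 ++ v2) = hdist u1 v1 + hdist u2 v2 := by
  unfold hdist
  rw [List.zip_append h, List.filter_append, List.length_append]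

lemma hdist_self {σ : Type*} [DecidableEq σ] (u : List σ) : hdist u u = 0 := by
  induction u with
  | nil => rfl
  | cons a t ih => simpa [hdist, List.zip_cons_cons] using ih

lemma intercalate_cc {σ : Type*} (sep a b : List σ) (t : List (List σ)) :
    List.intercalate sep (a :: b :: t) = a ++ (sep ++ List.intercalate sep (b :: t)) := by
  simp [List.intercalate]

lemma key {σ : Type*} [DecidableEq σ] (sep : List σ) :
    ∀ (L1 L2 : List (List σ)), L1.length = L2.length →
    (∀ p ∈ L1.zip L2, p.1.length = p.2.length) →
    hdist (List.intercalate sep L1) (List.intercalate sep L2)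
      = ((L1.zip L2).map fun p => hdist p.1 p.2).sum := by
  intro L1
  induction L1 with
  | nil => intro L2 h _; cases L2 with
    | nil => simp [List.intercalate, hdist]
    | cons b t => simp at h
  | cons a t ih =>
    intro L2 h hl
    cases L2 with
    | nil => simp at h
    | cons b t2 =>
      cases t with
      | nil =>
        cases t2 with
        | nil => simp [List.intercalate]
        | cons c t3 => simp at h
      | cons a2 t' =>
        cases t2 with
        | nil => simp at h
        | cons b2 t2' =>
          have hab : a.length = b.length := hl (a, b) (by simp)
          have ihr := ih (b2 :: t2') (by simpa using h)
            (fun p hp => hl p (by simp at hp ⊢; tauto))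
          rw [intercalate_cc, intercalate_cc,
              hdist_append_s12 _ _ _ _ hab,
              hdist_append_s12 _ _ _ _ (rfl : sep.length = sep.length),
              hdist_self, ihr]
          simp [List.zip_cons_cons]

lemma zip_ofFn {α β : Type*} {n : ℕ} (f : Fin n → α) (g : Fin n → β) :
    (List.ofFn f).zip (List.ofFn g) = List.ofFn (fun i => (f i, g i)) := by
  apply List.ext_getElem
  · simp
  · intro i h1 h2
    simp [List.getElem_zip]

lemma gad (a b : Bool) : hdist (Agad a) (Bgad b) = if a && b then 3 else 1 := by
  cases a <;> cases b <;> decide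

/-- Orthogonality of binary vectors is characterized by the coordinate gadgets:
each coordinate pair has Hamming distance 1 iff the vectors are orthogonal (distance 3
at some coordinate otherwise), and consequently the separator-joined encodings have
Hamming distance d if orthogonal, and ≥ d + 2 otherwise. -/
theorem stmt12 (d : ℕ) (u v : Fin d → Bool) (sep : List Bool) :
    ((∀ k, ¬(u k = true ∧ v k = true)) ↔ ∀ k, hdist (Agad (u k)) (Bgad (v k)) = 1) ∧
    (¬(∀ k, ¬(u k = true ∧ v k = true)) → ∃ k, hdist (Agad (u k)) (Bgad (v k)) = 3) ∧
    ((∀ k, ¬(u k = true ∧ v k = true)) →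
      hdist (List.intercalate sep (List.ofFn fun k => Agad (u k)))
        (List.intercalate sep (List.ofFn fun k => Bgad (v k))) = d) ∧
    (¬(∀ k, ¬(u k = true ∧ v k = true)) →
      d + 2 ≤ hdist (List.intercalate sep (List.ofFn fun k => Agad (u k)))
        (List.intercalate sep (List.ofFn fun k => Bgad (v k)))) := by
  have hkey : hdist (List.intercalate sep (List.ofFn fun k => Agad (u k)))
      (List.intercalate sep (List.ofFn fun k => Bgad (v k)))
      = ∑ k : Fin d, hdist (Agad (u k)) (Bgad (v k)) := by
    rw [key sep _ _ (by simp)]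
    · rw [zip_ofFn, List.map_ofFn, List.sum_ofFn]
      rfl
    · intro p hp
      rw [zip_ofFn] at hp
      simp only [List.mem_ofFn] at hp
      obtain ⟨i, rfl⟩ := hp
      cases hu : u i <;> cases hv : v i <;> simp [hu, hv, Agad, Bgad]
  have hiff : (∀ k, ¬(u k = true ∧ v k = true)) ↔
      ∀ k, hdist (Agad (u k)) (Bgad (v k)) = 1 := by
    constructor
    · intro h k
      rw [gad]
      rcases hu : u k <;> rcases hv : v k <;> simp_all
    · intro h k hk
      have := h k
      rw [gad, hk.1, hk.2] at this
      simp at this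
  have hex : ¬(∀ k, ¬(u k = true ∧ v k = true)) →
      ∃ k, hdist (Agad (u k)) (Bgad (v k)) = 3 := by
    intro h
    push_neg at h
    obtain ⟨k, hk1, hk2⟩ := h
    exact ⟨k, by rw [gad, hk1, hk2]; rfl⟩
  refine ⟨hiff, hex, ?_, ?_⟩
  · intro h
    rw [hkey]
    have := hiff.mp h
    simp [this]
  · intro h
    rw [hkey]
    obtain ⟨k0, hk0⟩ := hex h
    have hone : ∀ k : Fin d, 1 ≤ hdist (Agad (u k)) (Bgad (v k)) := by
      intro k; rw [gad]; split <;> omega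
    have hsplit : ∑ k : Fin d, hdist (Agad (u k)) (Bgad (v k))
        = (∑ k ∈ Finset.univ.erase k0, hdist (Agad (u k)) (Bgad (v k)))
          + hdist (Agad (u k0)) (Bgad (v k0)) :=
      (Finset.sum_erase_add Finset.univ _ (Finset.mem_univ k0)).symm
    have hsum2 : (Finset.univ.erase k0).card ≤
        ∑ k ∈ Finset.univ.erase k0, hdist (Agad (u k)) (Bgad (v k)) := by
      simpa using Finset.card_nsmul_le_sum (Finset.univ.erase k0)
        (fun k => hdist (Agad (u k)) (Bgad (v k))) 1 (fun k _ => hone k)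
    have hcard : (Finset.univ.erase k0).card = d - 1 := by
      rw [Finset.card_erase_of_mem (Finset.mem_univ k0)]
      simp
    have hd : 0 < d := k0.pos
    omega
end

section
/- Every non-cross pattern is 1-local: if α is a pattern such that for any two variables x, y ∈ var(α), all occurrences of x and all occurrences of y are non-interleaved (i.e., scopes of distinct variables are pairwise disjoint), then ordering the variables by the position of their first occurrence gives a marking sequence under which, at each step, the marked variable positions in the variable-skeleton of α form a single contiguous block. -/
private lemma fm_exists {A B : Type*} (f : A → Option B) (l : List A) (k : ℕ) (b : B)
    (h : (l.filterMap f)[k]? = some b) : ∃ (i : ℕ) (a : A), l[i]? = some a ∧ f a = some b := by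
  have hb : b ∈ l.filterMap f := by
    obtain ⟨hl, rfl⟩ := List.getElem?_eq_some_iff.mp h
    exact List.getElem_mem hl
  rw [List.mem_filterMap] at hb
  obtain ⟨a, ha, hfa⟩ := hb
  obtain ⟨i, hi, rfl⟩ := List.getElem_of_mem ha
  exact ⟨i, _, List.getElem?_eq_getElem hi, hfa⟩

private lemma fm_pair {A B : Type*} (f : A → Option B) :
    ∀ (l : List A) (j j' : ℕ), j < j' → ∀ b b',
    (l.filterMap f)[j]? = some b → (l.filterMap f)[j']? = some b' →
    ∃ (i i' : ℕ), i < i' ∧ (∃ a : A, l[i]? = some a ∧ f a = some b) ∧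
      (∃ a' : A, l[i']? = some a' ∧ f a' = some b') := by
  intro l
  induction l with
  | nil => intro j j' _ b b' h; simp at h
  | cons a t ih =>
    intro j j' hjj b b' hb hb'
    rcases hfa : f a with _ | c
    · rw [List.filterMap_cons_none hfa] at hb hb'
      obtain ⟨i, i', hii, ⟨x, hx, hfx⟩, ⟨x', hx', hfx'⟩⟩ := ih j j' hjj b b' hb hb'
      exact ⟨i + 1, i' + 1, by omega, ⟨x, by simpa using hx, hfx⟩,
        ⟨x', by simpa using hx', hfx'⟩⟩
    · rw [List.filterMap_cons_some hfa] at hb hb'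
      rcases j with _ | j
      · simp at hb
        obtain ⟨j'', rfl⟩ : ∃ j'', j' = j'' + 1 := ⟨j' - 1, by omega⟩
        rw [List.getElem?_cons_succ] at hb'
        obtain ⟨i', x', hx', hfx'⟩ := fm_exists f t j'' b' hb'
        exact ⟨0, i' + 1, by omega, ⟨a, by simp, hb ▸ hfa⟩, ⟨x', by simpa using hx', hfx'⟩⟩
      · obtain ⟨j'', rfl⟩ : ∃ j'', j' = j'' + 1 := ⟨j' - 1, by omega⟩
        rw [List.getElem?_cons_succ] at hb hb'
        obtain ⟨i, i', hii, ⟨x, hx, hfx⟩, ⟨x', hx', hfx'⟩⟩ :=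
          ih j j'' (by omega) b b' hb hb'
        exact ⟨i + 1, i' + 1, by omega, ⟨x, by simpa using hx, hfx⟩,
          ⟨x', by simpa using hx', hfx'⟩⟩

private lemma getRight_inr {σ V : Type*} {a : σ ⊕ V} {z : V}
    (h : Sum.getRight? a = some z) : a = Sum.inr z := by
  cases a <;> simp_all

/-- Every non-cross pattern is 1-local: if the scopes of distinct variables of α are
pairwise disjoint (no interleaving of occurrences), then for every set S of variables
that is downward closed w.r.t. the order of first occurrence (i.e. marking the variables
in order of first occurrence), the S-marked positions of the variable skeleton of α form
one contiguous block. -/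
theorem stmt18 {σ V : Type*} (α : List (σ ⊕ V))
    (noncross : ∀ x y : V, x ≠ y →
      (∀ i j : ℕ, α[i]? = some (Sum.inr x) → α[j]? = some (Sum.inr y) → i < j) ∨
      (∀ i j : ℕ, α[i]? = some (Sum.inr x) → α[j]? = some (Sum.inr y) → j < i)) :
    ∀ S : Set V,
      (∀ x y : V, (∃ i : ℕ, α[i]? = some (Sum.inr x)) → y ∈ S →
        sInf {i : ℕ | α[i]? = some (Sum.inr x)} ≤ sInf {i : ℕ | α[i]? = some (Sum.inr y)} →
        x ∈ S) →
      ∀ j₁ j₂ j₃ : ℕ, j₁ ≤ j₂ → j₂ ≤ j₃ →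
        (∃ x ∈ S, (α.filterMap Sum.getRight?)[j₁]? = some x) →
        (∃ x ∈ S, (α.filterMap Sum.getRight?)[j₃]? = some x) →
        (∃ x ∈ S, (α.filterMap Sum.getRight?)[j₂]? = some x) := by
  intro S closed j₁ j₂ j₃ h12 h23 _ h3
  obtain ⟨y, hyS, hy⟩ := h3
  rcases eq_or_lt_of_le h23 with rfl | h23'
  · exact ⟨y, hyS, hy⟩
  -- j₂ < j₃, so β[j₂]? is some z
  have hlen : j₂ < (α.filterMap Sum.getRight?).length := by
    obtain ⟨hl, -⟩ := List.getElem?_eq_some_iff.mp hy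
    omega
  obtain ⟨z, hz⟩ : ∃ z, (α.filterMap Sum.getRight?)[j₂]? = some z :=
    ⟨_, List.getElem?_eq_getElem hlen⟩
  by_cases hzy : z = y
  · exact ⟨z, hzy ▸ hyS, hz⟩
  obtain ⟨i, i', hii, ⟨a, ha, hfa⟩, ⟨a', ha', hfa'⟩⟩ :=
    fm_pair Sum.getRight? α j₂ j₃ h23' z y hz hy
  have haz : α[i]? = some (Sum.inr z) := by rw [ha, getRight_inr hfa]
  have hay : α[i']? = some (Sum.inr y) := by rw [ha', getRight_inr hfa']
  -- z occurs before y everywhere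
  have hzbefore : ∀ p q : ℕ, α[p]? = some (Sum.inr z) → α[q]? = some (Sum.inr y) → p < q := by
    rcases noncross z y hzy with h | h
    · exact h
    · exact absurd (h i i' haz hay) (by omega)
  refine ⟨z, closed z y ⟨i, haz⟩ hyS ?_, hz⟩
  have hzmem : sInf {i : ℕ | α[i]? = some (Sum.inr z)} ∈ {i : ℕ | α[i]? = some (Sum.inr z)} :=
    Nat.sInf_mem ⟨i, haz⟩
  have hymem : sInf {i : ℕ | α[i]? = some (Sum.inr y)} ∈ {i : ℕ | α[i]? = some (Sum.inr y)} :=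
    Nat.sInf_mem ⟨i', hay⟩
  exact le_of_lt (hzbefore _ _ hzmem hymem)
end
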